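/- Let A be a finite-dimensional formally real Jordan algebra with an associative inner product ⟨·,·⟩. Then ⟨XY, XY⟩ ≤ ⟨X², Y²⟩ for all X, Y in A. -/
import Mathlib

open RealInnerProductSpace

set_option maxHeartbeats 1000000

/-- Polarized Jordan identity. -/
private lemma jordan_lin {V : Type*} [AddCommGroup V] [Module ℝ V]
    (mul : V →ₗ[ℝ] V →ₗ[ℝ] V)
    (comm : ∀ X Y : V, mul X Y = mul Y X)
    (jordan : ∀ X Y : V, mul X (mul (mul X X) Y) = mul (mul X X) (mul X Y))
    (p q r : V) :
    mul q (mul (mul p p) r) + (2:ℝ) • mul p (mul (mul p q) r)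
      = (2:ℝ) • mul (mul p q) (mul p r) + mul (mul p p) (mul q r) := by
  have h1 := jordan (p + q) r
  have h2 := jordan (p - q) r
  have h3 := jordan q r
  simp only [map_add, map_sub, LinearMap.add_apply, LinearMap.sub_apply] at h1 h2
  rw [comm q p] at h1 h2
  linear_combination (norm := module) ((2:ℝ)⁻¹ : ℝ) • h1 - ((2:ℝ)⁻¹:ℝ) • h2 - h3

/-- Core lemma: if a ∘ v = 0 and a² ∘ v = d • v with v ≠ 0, then d ≥ 0. -/
private lemma jordan_core {V : Type*} [NormedAddCommGroup V] [InnerProductSpace ℝ V]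
    (mul : V →ₗ[ℝ] V →ₗ[ℝ] V)
    (comm : ∀ X Y : V, mul X Y = mul Y X)
    (jordan : ∀ X Y : V, mul X (mul (mul X X) Y) = mul (mul X X) (mul X Y))
    (E : V) (hE : ∀ X : V, mul E X = X)
    (assoc : ∀ X Y Z : V, ⟪mul X Y, Z⟫ = ⟪X, mul Y Z⟫)
    (a v : V) (d : ℝ) (hv : v ≠ 0) (h0 : mul a v = 0)
    (hd : mul (mul a a) v = d • v) : 0 ≤ d := by
  have symm : ∀ z u w : V, ⟪mul z u, w⟫ = ⟪u, mul z w⟫ := by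
    intro z u w; rw [comm z u, assoc]
  have hA : ∀ w, mul a (mul (mul v v) w) = mul (mul v v) (mul a w) := by
    intro w
    have h := jordan_lin mul comm jordan v a w
    rw [comm v a, h0] at h
    simpa using h
  have hB : mul (mul a a) (mul v v) = d • mul v v := by
    have h := jordan_lin mul comm jordan a v v
    rw [h0, hd] at h
    simpa [map_smul] using h.symm
  have hSq : mul a (mul a (mul v v)) = d • mul v v := by
    rw [comm a (mul v v), hA a, comm (mul v v) (mul a a), hB]
  have hv2 : mul v v ≠ 0 := by
    intro h
    have h' : ⟪mul v v, E⟫ = ⟪v, v⟫ := by rw [assoc, comm v E, hE]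
    rw [h, inner_zero_left] at h'
    exact hv (inner_self_eq_zero.mp h'.symm)
  have key : d * ⟪mul v v, mul v v⟫ = ⟪mul a (mul v v), mul a (mul v v)⟫ := by
    calc d * ⟪mul v v, mul v v⟫ = ⟪d • mul v v, mul v v⟫ := (real_inner_smul_left _ _ _).symm
      _ = ⟪mul a (mul a (mul v v)), mul v v⟫ := by rw [hSq]
      _ = ⟪mul a (mul v v), mul a (mul v v)⟫ := symm a _ _
  have hne : ⟪mul v v, mul v v⟫ ≠ 0 := fun h => hv2 (inner_self_eq_zero.mp h)
  have hpos : 0 < ⟪mul v v, mul v v⟫ := lt_of_le_of_ne real_inner_self_nonneg (Ne.symm hne)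
  nlinarith [real_inner_self_nonneg (x := mul a (mul v v))]

/-- Eigenvalues of D = L_{x²} - L_x² are nonnegative. -/
private lemma jordan_eigen_nonneg {V : Type*} [NormedAddCommGroup V] [InnerProductSpace ℝ V]
    [FiniteDimensional ℝ V]
    (mul : V →ₗ[ℝ] V →ₗ[ℝ] V)
    (comm : ∀ X Y : V, mul X Y = mul Y X)
    (jordan : ∀ X Y : V, mul X (mul (mul X X) Y) = mul (mul X X) (mul X Y))
    (E : V) (hE : ∀ X : V, mul E X = X)
    (assoc : ∀ X Y Z : V, ⟪mul X Y, Z⟫ = ⟪X, mul Y Z⟫)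
    (x : V) (d : ℝ) (v : V) (hv : v ≠ 0)
    (hDv : mul (mul x x) v - mul x (mul x v) = d • v) : 0 ≤ d := by
  have symm : ∀ z u w : V, ⟪mul z u, w⟫ = ⟪u, mul z w⟫ := by
    intro z u w; rw [comm z u, assoc]
  set D : V →ₗ[ℝ] V := mul (mul x x) - (mul x) ∘ₗ (mul x) with hD
  have hDapp : ∀ w, D w = mul (mul x x) w - mul x (mul x w) := by
    intro w; simp [hD]
  have hcommD : ∀ w, D (mul x w) = mul x (D w) := by
    intro w
    rw [hDapp, hDapp, map_sub, jordan x w]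
  set W : Submodule ℝ V := LinearMap.ker (D - d • (LinearMap.id : V →ₗ[ℝ] V)) with hW
  have memW : ∀ w : V, w ∈ W ↔ D w = d • w := by
    intro w
    simp [hW, LinearMap.mem_ker, sub_eq_zero]
  have hvW : v ∈ W := (memW v).mpr (by rw [hDapp]; exact hDv)
  have hxW : ∀ w ∈ W, mul x w ∈ W := by
    intro w hw
    rw [memW] at hw ⊢
    rw [hcommD, hw, map_smul]
  haveI : Nontrivial W := by
    refine ⟨⟨v, hvW⟩, 0, ?_⟩
    simp [Subtype.ext_iff, hv]
  set Lx' : W →ₗ[ℝ] W := (mul x).restrict hxW with hLx'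
  have hsym' : Lx'.IsSymmetric := by
    intro u w
    have h := symm x u w
    simpa [hLx', LinearMap.restrict_apply, Submodule.coe_inner] using h
  have hn : 0 < Module.finrank ℝ W := Module.finrank_pos
  set i0 : Fin (Module.finrank ℝ W) := ⟨0, hn⟩ with hi0
  set u : W := hsym'.eigenvectorBasis rfl i0 with hu
  set lam : ℝ := hsym'.eigenvalues rfl i0 with hlam
  have hLu : Lx' u = lam • u := hsym'.apply_eigenvectorBasis rfl i0
  have huV : mul x (u : V) = lam • (u : V) := by
    have h := congrArg (Subtype.val) hLu
    simpa [hLx', LinearMap.restrict_apply] using h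
  have hu0 : (u : V) ≠ 0 := by
    have h1 : u ≠ 0 := by
      have := (hsym'.eigenvectorBasis rfl).toBasis.ne_zero i0
      simpa [hu] using this
    intro h
    exact h1 (Submodule.coe_eq_zero.mp h)
  have hDu : D (u : V) = d • (u : V) := (memW _).mp u.2
  set a : V := x - lam • E with ha
  have hav : mul a (u : V) = 0 := by
    rw [ha, map_sub, LinearMap.sub_apply, map_smul, LinearMap.smul_apply, hE, huV]
    simp
  have hxE : mul x E = x := by rw [comm, hE]
  have hx2u : mul (mul x x) (u:V) = d • (u:V) + lam • (lam • (u:V)) := by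
    have h := hDapp (u:V)
    rw [hDu] at h
    rw [eq_comm, sub_eq_iff_eq_add] at h
    rw [h, huV, map_smul, huV]
  have haau : mul (mul a a) (u:V) = d • (u:V) := by
    have expand : mul a a = mul x x - (2 * lam) • x + (lam * lam) • E := by
      rw [ha]
      simp only [map_sub, map_smul, LinearMap.sub_apply, LinearMap.smul_apply, hE, hxE]
      module
    rw [expand]
    simp only [map_add, map_sub, map_smul, LinearMap.add_apply, LinearMap.sub_apply,
      LinearMap.smul_apply, hE, huV, hx2u]
    module
  exact jordan_core mul comm jordan E hE assoc a (u:V) d hu0 hav haau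

/-- In a finite-dimensional formally real Jordan algebra with an
associative inner product, ⟨XY, XY⟩ ≤ ⟨X², Y²⟩. -/
theorem formally_real_inner_ineq
    {V : Type*} [NormedAddCommGroup V] [InnerProductSpace ℝ V] [FiniteDimensional ℝ V]
    (mul : V →ₗ[ℝ] V →ₗ[ℝ] V)
    (comm : ∀ X Y : V, mul X Y = mul Y X)
    (jordan : ∀ X Y : V, mul X (mul (mul X X) Y) = mul (mul X X) (mul X Y))
    (E : V) (hE : ∀ X : V, mul E X = X)
    (formallyReal : ∀ X Y : V, mul X X + mul Y Y = 0 → X = 0 ∧ Y = 0)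
    (assoc : ∀ X Y Z : V, ⟪mul X Y, Z⟫ = ⟪X, mul Y Z⟫) :
    ∀ X Y : V, ⟪mul X Y, mul X Y⟫ ≤ ⟪mul X X, mul Y Y⟫ := by
  intro x y
  have symm : ∀ z u w : V, ⟪mul z u, w⟫ = ⟪u, mul z w⟫ := by
    intro z u w; rw [comm z u, assoc]
  set D : V →ₗ[ℝ] V := mul (mul x x) - (mul x) ∘ₗ (mul x) with hD
  have hDapp : ∀ w, D w = mul (mul x x) w - mul x (mul x w) := by
    intro w; simp [hD]
  have hDsymm : D.IsSymmetric := by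
    intro u w
    simp only [hDapp, inner_sub_left, inner_sub_right]
    rw [symm (mul x x) u w, symm x (mul x u) w, symm x u (mul x w)]
  have hPSD : 0 ≤ ⟪D y, y⟫ := by
    set b := hDsymm.eigenvectorBasis rfl with hb
    rw [← b.sum_inner_mul_inner (D y) y]
    apply Finset.sum_nonneg
    intro i _
    have hbi : D (b i) = hDsymm.eigenvalues rfl i • b i := hDsymm.apply_eigenvectorBasis rfl i
    have hbne : b i ≠ 0 := b.toBasis.ne_zero i
    have hev : 0 ≤ hDsymm.eigenvalues rfl i := by
      apply jordan_eigen_nonneg mul comm jordan E hE assoc x _ (b i) hbne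
      rw [← hDapp, hbi]
    have h2 : ⟪D y, b i⟫ = hDsymm.eigenvalues rfl i * ⟪y, b i⟫ := by
      rw [hDsymm y (b i), hbi, real_inner_smul_right]
    have h3 : ⟪D y, b i⟫ * ⟪b i, y⟫
        = hDsymm.eigenvalues rfl i * (⟪b i, y⟫ * ⟪b i, y⟫) := by
      rw [h2, real_inner_comm y (b i)]; ring
    rw [h3]
    exact mul_nonneg hev (mul_self_nonneg _)
  have e1 : ⟪mul x (mul x y), y⟫ = ⟪mul x y, mul x y⟫ := symm x (mul x y) y
  have e2 : ⟪mul (mul x x) y, y⟫ = ⟪mul x x, mul y y⟫ := assoc (mul x x) y y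
  have e3 : ⟪D y, y⟫ = ⟪mul x x, mul y y⟫ - ⟪mul x y, mul x y⟫ := by
    rw [hDapp, inner_sub_left, e1, e2]
  linarith
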